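/- Let A be an m-dimensional permutation array of even order n defined by a bijection φ : [n_1]×⋯×[n_k] → [n_{k+1}]×⋯×[n_m], and let E be a nonempty subset of [m] with n_i even for all i ∈ E, such that E ⊆ {1,...,k} or E ⊆ {k+1,...,m}. Let 𝓗_E be the multiset of toroidal vectors (h_1,...,h_m) of A with h_i = n_i/2 for all i ∈ E. Then |𝓗_E| · ∏_{i∈E} n_i = n². -/
import Mathlib


open scoped Classical

/-- The half-length element `q/2` of `ℤ_q`. -/
def halfElt (q : ℕ) : ZMod q := ((q / 2 : ℕ) : ZMod q)

/-- **counting lemma.** Let `A` be an `m`-dimensional permutation array of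
even order `N` defined by a bijection `φ`, and let `E` be a nonempty set of coordinates
(each of even length) contained either in the first `k` coordinates or in the last
`m - k` coordinates. If `𝓗_E` is the multiset of toroidal vectors of `A` whose `i`-th
component equals `n_i / 2` for all `i ∈ E`, then `|𝓗_E| ⬝ ∏_{i∈E} n_i = N²`. -/
lemma halfElt_ne_zero {q : ℕ} (hq : 2 ≤ q) (heq : Even q) : halfElt q ≠ 0 := by
  haveI : NeZero q := ⟨by omega⟩
  intro h
  have hv : (halfElt q).val = q / 2 := ZMod.val_cast_of_lt (by omega)
  rw [h, ZMod.val_zero] at hv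
  omega

def shiftFin {q : ℕ} [NeZero q] (x : Fin q) : Fin q :=
  ⟨(((x : ℕ) : ZMod q) + halfElt q).val, ZMod.val_lt _⟩

lemma cond_iff {q : ℕ} (hq : 2 ≤ q) (x y : Fin q) :
    (((y : ℤ) : ZMod q) - ((x : ℤ) : ZMod q)) = halfElt q ↔
      y = @shiftFin q ⟨by omega⟩ x := by
  haveI : NeZero q := ⟨by omega⟩
  have h1 : (((y : ℤ) : ZMod q) - ((x : ℤ) : ZMod q))
      = ((y : ℕ) : ZMod q) - ((x : ℕ) : ZMod q) := by push_cast; ring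
  rw [h1, sub_eq_iff_eq_add', Fin.ext_iff]
  show _ ↔ (y : ℕ) = (((x : ℕ) : ZMod q) + halfElt q).val
  constructor
  · intro h
    have := congrArg ZMod.val h
    rwa [ZMod.val_cast_of_lt y.isLt] at this
  · intro h
    rw [h, ZMod.natCast_rightInverse _]

lemma shiftFin_ne {q : ℕ} (hq : 2 ≤ q) (heq : Even q) (x : Fin q) :
    @shiftFin q ⟨by omega⟩ x ≠ x := by
  haveI : NeZero q := ⟨by omega⟩
  intro h
  have h2 := congrArg (fun m : Fin q => ((m : ℕ) : ZMod q)) h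
  simp only [shiftFin] at h2
  rw [ZMod.natCast_rightInverse _] at h2
  have : halfElt q = 0 := by
    have := left_eq_add.mp h2.symm
    exact this
  exact halfElt_ne_zero hq heq this

lemma key {k : ℕ} (n : Fin k → ℕ) (hn : ∀ i, 2 ≤ n i)
    (S : Finset (Fin k)) (hS : S.Nonempty) (hSe : ∀ a ∈ S, Even (n a)) :
    ((Finset.univ.filter
        (fun p : ((i : Fin k) → Fin (n i)) × ((i : Fin k) → Fin (n i)) =>
          p.1 ≠ p.2 ∧ ∀ a ∈ S,
            (((p.2 a : ℤ) - (p.1 a : ℤ)) : ZMod (n a)) = halfElt (n a))).card)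
      * ∏ a ∈ S, n a = (∏ i, n i) ^ 2 := by
  haveI : ∀ a : Fin k, NeZero (n a) := fun a => ⟨by have := hn a; omega⟩
  set X := (i : Fin k) → Fin (n i)
  have hpred : ∀ p : X × X,
      (p.1 ≠ p.2 ∧ ∀ a ∈ S, (((p.2 a : ℤ) - (p.1 a : ℤ)) : ZMod (n a)) = halfElt (n a))
        ↔ (∀ a ∈ S, p.2 a = shiftFin (p.1 a)) := by
    intro p
    constructor
    · rintro ⟨-, h⟩ a ha
      exact (cond_iff (hn a) _ _).mp (h a ha)
    · intro h
      refine ⟨?_, fun a ha => (cond_iff (hn a) _ _).mpr (h a ha)⟩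
      obtain ⟨a, ha⟩ := hS
      intro hcontra
      have := h a ha
      rw [← hcontra] at this
      exact shiftFin_ne (hn a) (hSe a ha) (p.1 a) this.symm
  rw [Finset.filter_congr (fun p _ => by exact_mod_cast (hpred p))]
  -- count via equiv
  have hcard : (Finset.univ.filter
      (fun p : X × X => ∀ a ∈ S, p.2 a = shiftFin (p.1 a))).card
      = (∏ i, n i) * ∏ a ∈ Sᶜ, n a := by
    rw [← Fintype.card_subtype]
    haveI : Fintype {a : Fin k // a ∉ S} := Fintype.ofFinite _
    have e : {p : X × X // ∀ a ∈ S, p.2 a = shiftFin (p.1 a)}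
        ≃ X × ((a : {a : Fin k // a ∉ S}) → Fin (n a)) :=
      { toFun := fun p => (p.1.1, fun a => p.1.2 a)
        invFun := fun q => ⟨(q.1, fun a => if h : a ∈ S then shiftFin (q.1 a) else q.2 ⟨a, h⟩),
          fun a ha => by simp [ha]⟩
        left_inv := fun p => by
          apply Subtype.ext
          refine Prod.ext rfl ?_
          funext a
          by_cases h : a ∈ S
          · simp only [dif_pos h]
            exact (p.2 a h).symm
          · simp only [dif_neg h]
        right_inv := fun q => by
          refine Prod.ext rfl ?_
          funext a
          simp [a.2] }
    rw [Fintype.card_congr e, Fintype.card_prod, Fintype.card_pi, Fintype.card_pi]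
    congr 1
    · simp
    · rw [Finset.prod_subtype Sᶜ (fun x => Finset.mem_compl) (fun a => n a)]
      simp
      exact Fintype.ofFinite _
  rw [hcard, mul_assoc, Finset.prod_compl_mul_prod, sq]

theorem counting_lemma (k l : ℕ) (n₁ : Fin k → ℕ) (n₂ : Fin l → ℕ) (N : ℕ)
    (hn₁ : ∀ i, 2 ≤ n₁ i) (hn₂ : ∀ j, 2 ≤ n₂ j)
    (h₁ : ∏ i, n₁ i = N) (h₂ : ∏ j, n₂ j = N) (hNeven : Even N)
    (φ : ((i : Fin k) → Fin (n₁ i)) ≃ ((j : Fin l) → Fin (n₂ j)))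
    (E : Finset (Fin k ⊕ Fin l)) (hE : E.Nonempty)
    (hEeven : ∀ i ∈ E, Even (Sum.elim n₁ n₂ i))
    (hEblock : (∀ i ∈ E, ∃ a, i = Sum.inl a) ∨ (∀ i ∈ E, ∃ b, i = Sum.inr b)) :
    ((Finset.univ.filter
        (fun p : ((i : Fin k) → Fin (n₁ i)) × ((i : Fin k) → Fin (n₁ i)) =>
          p.1 ≠ p.2 ∧ ∀ i ∈ E,
            match i with
            | Sum.inl a => (((p.2 a : ℤ) - (p.1 a : ℤ)) : ZMod (n₁ a)) = halfElt (n₁ a)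
            | Sum.inr b =>
                (((φ p.2 b : ℤ) - (φ p.1 b : ℤ)) : ZMod (n₂ b)) = halfElt (n₂ b))).card)
      * ∏ i ∈ E, Sum.elim n₁ n₂ i = N ^ 2 := by
  rcases hEblock with hL | hR
  · set S : Finset (Fin k) := E.preimage Sum.inl (Sum.inl_injective.injOn) with hSdef
    have hmem : ∀ a : Fin k, a ∈ S ↔ Sum.inl a ∈ E := fun a => Finset.mem_preimage
    have hEimg : E = S.image Sum.inl := by
      ext i
      simp only [Finset.mem_image]
      constructor
      · intro hi
        obtain ⟨a, rfl⟩ := hL i hi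
        exact ⟨a, (hmem a).mpr hi, rfl⟩
      · rintro ⟨a, ha, rfl⟩
        exact (hmem a).mp ha
    have hSne : S.Nonempty := by
      obtain ⟨i, hi⟩ := hE
      obtain ⟨a, rfl⟩ := hL i hi
      exact ⟨a, (hmem a).mpr hi⟩
    have hprod : ∏ i ∈ E, Sum.elim n₁ n₂ i = ∏ a ∈ S, n₁ a := by
      rw [hEimg, Finset.prod_image (fun a _ b _ h => Sum.inl_injective h)]
      rfl
    rw [hprod, ← h₁, ← key n₁ hn₁ S hSne (fun a ha => hEeven _ ((hmem a).mp ha))]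
    congr 1
    congr 1
    apply Finset.filter_congr
    intro p _
    constructor
    · rintro ⟨hne, h⟩
      exact ⟨hne, fun a ha => h (Sum.inl a) ((hmem a).mp ha)⟩
    · rintro ⟨hne, h⟩
      refine ⟨hne, fun i hi => ?_⟩
      obtain ⟨a, rfl⟩ := hL i hi
      exact h a ((hmem a).mpr hi)
  · set S : Finset (Fin l) := E.preimage Sum.inr (Sum.inr_injective.injOn) with hSdef
    have hmem : ∀ b : Fin l, b ∈ S ↔ Sum.inr b ∈ E := fun b => Finset.mem_preimage
    have hEimg : E = S.image Sum.inr := by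
      ext i
      simp only [Finset.mem_image]
      constructor
      · intro hi
        obtain ⟨b, rfl⟩ := hR i hi
        exact ⟨b, (hmem b).mpr hi, rfl⟩
      · rintro ⟨b, hb, rfl⟩
        exact (hmem b).mp hb
    have hSne : S.Nonempty := by
      obtain ⟨i, hi⟩ := hE
      obtain ⟨b, rfl⟩ := hR i hi
      exact ⟨b, (hmem b).mpr hi⟩
    have hprod : ∏ i ∈ E, Sum.elim n₁ n₂ i = ∏ b ∈ S, n₂ b := by
      rw [hEimg, Finset.prod_image (fun a _ b _ h => Sum.inr_injective h)]
      rfl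
    have hbij : ((Finset.univ.filter
        (fun p : ((i : Fin k) → Fin (n₁ i)) × ((i : Fin k) → Fin (n₁ i)) =>
          p.1 ≠ p.2 ∧ ∀ i ∈ E,
            match i with
            | Sum.inl a => (((p.2 a : ℤ) - (p.1 a : ℤ)) : ZMod (n₁ a)) = halfElt (n₁ a)
            | Sum.inr b =>
                (((φ p.2 b : ℤ) - (φ p.1 b : ℤ)) : ZMod (n₂ b)) = halfElt (n₂ b))).card)
        = ((Finset.univ.filter
        (fun q : ((j : Fin l) → Fin (n₂ j)) × ((j : Fin l) → Fin (n₂ j)) =>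
          q.1 ≠ q.2 ∧ ∀ b ∈ S,
            (((q.2 b : ℤ) - (q.1 b : ℤ)) : ZMod (n₂ b)) = halfElt (n₂ b))).card) := by
      apply Finset.card_bij' (fun p _ => (φ p.1, φ p.2)) (fun q _ => (φ.symm q.1, φ.symm q.2))
      · intro p hp
        simp only [Finset.mem_filter, Finset.mem_univ, true_and] at hp ⊢
        obtain ⟨hne, h⟩ := hp
        refine ⟨fun hc => hne (φ.injective hc), fun b hb => h (Sum.inr b) ((hmem b).mp hb)⟩
      · intro q hq
        simp only [Finset.mem_filter, Finset.mem_univ, true_and] at hq ⊢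
        obtain ⟨hne, h⟩ := hq
        refine ⟨fun hc => hne (φ.symm.injective hc), fun i hi => ?_⟩
        obtain ⟨b, rfl⟩ := hR i hi
        show (((φ (φ.symm q.2) b : ℤ) - (φ (φ.symm q.1) b : ℤ)) : ZMod (n₂ b)) = halfElt (n₂ b)
        rw [Equiv.apply_symm_apply, Equiv.apply_symm_apply]
        exact h b ((hmem b).mpr hi)
      · intro p _
        simp
      · intro q _
        simp
    rw [hbij, hprod, ← h₂]
    exact key n₂ hn₂ S hSne (fun b hb => hEeven _ ((hmem b).mp hb))
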